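/- arXiv:1506.06038 — 2 statements merged into one kernel-verified Lean document; each statement's English description precedes it below -/
import Mathlib

section
/- Let Σ be an alphabet, 𝕄 = (M,+,val,𝟘) an idempotent timed valuation monoid, 𝓛 ⊆ 𝕋Σ⁺ a recognizable timed language and r : 𝕋Σ⁺ → M a recognizable quantitative timed language over 𝕄. Then the quantitative timed language r ∩ 𝓛 is recognizable over 𝕄. -/
open scoped NNReal Classical

/-! # Core definitions: timed automata and weighted timed automata -/

/-- Comparison operators ⋈ ∈ {<, ≤, =, ≥, >}. -/
inductive Cmp : Type
  | lt | le | eq | ge | gt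
  deriving DecidableEq

/-- Evaluation of a comparison `r ⋈ c` for `r ∈ ℝ≥0` and `c ∈ ℕ`. -/
def Cmp.eval : Cmp → ℝ≥0 → ℕ → Prop
  | .lt, r, c => r < (c : ℝ≥0)
  | .le, r, c => r ≤ (c : ℝ≥0)
  | .eq, r, c => r = (c : ℝ≥0)
  | .ge, r, c => (c : ℝ≥0) ≤ r
  | .gt, r, c => (c : ℝ≥0) < r

/-- Clock constraints over a set `C` of clocks: `True` or conjunctions of `x ⋈ c`. -/
inductive ClockConstraint (C : Type) : Type
  | tt : ClockConstraint C
  | atom : C → Cmp → ℕ → ClockConstraint C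
  | conj : ClockConstraint C → ClockConstraint C → ClockConstraint C

/-- A clock valuation assigns a non-negative real to each clock. -/
def ClockVal (C : Type) : Type := C → ℝ≥0

/-- Satisfaction of clock constraints. -/
def ClockConstraint.Sat {C : Type} (ν : ClockVal C) : ClockConstraint C → Prop
  | .tt => True
  | .atom x op c => op.eval (ν x) c
  | .conj φ ψ => φ.Sat ν ∧ ψ.Sat ν

/-- `ν + t`: add `t` to every clock. -/
def ClockVal.add {C : Type} (ν : ClockVal C) (t : ℝ≥0) : ClockVal C := fun x => ν x + t

/-- `ν[Λ := 0]`: reset the clocks in `Λ` to `0`. -/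
noncomputable def ClockVal.reset {C : Type} (ν : ClockVal C) (Λ : Set C) : ClockVal C :=
  fun x => if x ∈ Λ then 0 else ν x

/-- The clock valuation assigning `0` to every clock. -/
def ClockVal.zero {C : Type} : ClockVal C := fun _ => 0

/-- An edge of a timed automaton: an element of `L × Σ × Φ(C) × 2^C × L`. -/
structure Edge (L A C : Type) : Type where
  src : L
  label : A
  guard : ClockConstraint C
  reset : Set C
  dst : L

/-- A timed automaton over the alphabet `A`. -/
structure TimedAutomaton (A : Type) : Type 1 where
  L : Type
  C : Type
  finL : Finite L
  finC : Finite C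
  I : Set L
  F : Set L
  E : Set (Edge L A C)
  finE : E.Finite

/-- A (non-empty finite) timed word over `A`. -/
abbrev TimedWord (A : Type) : Type := { w : List (A × ℝ≥0) // w ≠ [] }

/-- `T.IsRunFrom ℓ ν w es` holds iff `es` is the sequence of edges of a run of `T`
reading the timed word `w`, starting in location `ℓ` with clock valuation `ν`,
and ending in a final location. -/
def TimedAutomaton.IsRunFrom {A : Type} (T : TimedAutomaton A) :
    T.L → ClockVal T.C → List (A × ℝ≥0) → List (Edge T.L A T.C) → Prop
  | ℓ, _, [], [] => ℓ ∈ T.F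
  | ℓ, ν, (a, t) :: w, e :: es =>
      e ∈ T.E ∧ e.src = ℓ ∧ e.label = a ∧ e.guard.Sat (ν.add t) ∧
      T.IsRunFrom e.dst ((ν.add t).reset e.reset) w es
  | _, _, [], _ :: _ => False
  | _, _, _ :: _, [] => False

/-- `Run_T(w)`: the set of runs (identified with their edge sequences) of `T` on `w`. -/
def TimedAutomaton.RunOn {A : Type} (T : TimedAutomaton A) (w : TimedWord A) :
    Set (List (Edge T.L A T.C)) :=
  { es | ∃ ℓ₀ ∈ T.I, T.IsRunFrom ℓ₀ ClockVal.zero w.1 es }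

/-- `L(T)`: the timed language accepted by `T`. -/
def TimedAutomaton.Lang {A : Type} (T : TimedAutomaton A) : Set (TimedWord A) :=
  { w | (T.RunOn w).Nonempty }

/-- A timed automaton is unambiguous if every timed word has at most one run. -/
def TimedAutomaton.Unambiguous {A : Type} (T : TimedAutomaton A) : Prop :=
  ∀ w : TimedWord A, (T.RunOn w).Subsingleton

/-- A timed automaton is deterministic if it has a single initial location and the guards of
any two distinct edges with the same source and label are jointly unsatisfiable. -/
def TimedAutomaton.Deterministic {A : Type} (T : TimedAutomaton A) : Prop :=
  (∃ ℓ, T.I = {ℓ}) ∧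
  ∀ e₁ ∈ T.E, ∀ e₂ ∈ T.E, e₁.src = e₂.src → e₁.label = e₂.label → e₁ ≠ e₂ →
    ∀ ν : ClockVal T.C, ¬ (e₁.guard.Sat ν ∧ e₂.guard.Sat ν)

/-- A timed automaton is sequential if it has a single initial location and any two edges
with the same source and label are equal. -/
def TimedAutomaton.Sequential {A : Type} (T : TimedAutomaton A) : Prop :=
  (∃ ℓ, T.I = {ℓ}) ∧
  ∀ e₁ ∈ T.E, ∀ e₂ ∈ T.E, e₁.src = e₂.src → e₁.label = e₂.label → e₁ = e₂

/-- A timed language is recognizable by a timed automaton satisfying `P`. -/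
def TLRecognizableBy {A : Type} (P : TimedAutomaton A → Prop) (𝓛 : Set (TimedWord A)) : Prop :=
  ∃ T : TimedAutomaton A, P T ∧ T.Lang = 𝓛

/-- A weighted timed automaton over the alphabet `A` and (the domain `M` of) a timed
valuation monoid: a timed automaton together with weights on locations and edges.
The timed valuation monoid itself is given by an `AddCommMonoid M` instance together with a
timed valuation function `val : List ((M × M) × ℝ≥0) → M` (only its values on non-empty
lists, i.e. on `𝕋(M×M)⁺`, ever matter). -/
structure WTA (A M : Type) extends TimedAutomaton A where
  wtL : L → M
  wtE : Edge L A C → M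

/-- The timed word `wt♯(ρ) ∈ 𝕋(M×M)⁺` associated with a run: the `i`-th letter is
`((wt(ℓ_{i-1}), wt(e_i)), t_i)`, where `ℓ_{i-1}` is the source location of edge `e_i`. -/
def WTA.runWord {A M : Type} (W : WTA A M) (w : List (A × ℝ≥0))
    (es : List (Edge W.L A W.C)) : List ((M × M) × ℝ≥0) :=
  List.zipWith (fun (p : A × ℝ≥0) e => ((W.wtL e.src, W.wtE e), p.2)) w es

/-- The behavior `‖W‖ : 𝕋A⁺ → M` of a WTA: `‖W‖(w) = Σ (val(wt♯(ρ)) : ρ ∈ Run_W(w))`,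
the empty sum being `0` (the monoid unit `𝟘`). -/
noncomputable def WTA.behavior {A M : Type} [AddCommMonoid M]
    (val : List ((M × M) × ℝ≥0) → M) (W : WTA A M) (w : TimedWord A) : M :=
  ∑ᶠ es ∈ W.toTimedAutomaton.RunOn w, val (W.runWord w.1 es)

/-- A quantitative timed language `r : 𝕋A⁺ → M` is recognizable over the timed valuation
monoid `(M, +, val, 𝟘)` by a WTA whose underlying timed automaton satisfies `P`. -/
def QTLRecognizableBy {A M : Type} [AddCommMonoid M] (val : List ((M × M) × ℝ≥0) → M)
    (P : TimedAutomaton A → Prop) (r : TimedWord A → M) : Prop :=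
  ∃ W : WTA A M, P W.toTimedAutomaton ∧ ∀ w, W.behavior val w = r w

/-- Recognizability (no restriction on the underlying timed automaton). -/
def QTLRecognizable {A M : Type} [AddCommMonoid M] (val : List ((M × M) × ℝ≥0) → M)
    (r : TimedWord A → M) : Prop :=
  ∃ W : WTA A M, ∀ w, W.behavior val w = r w

/-- Renaming of timed words along `h : Γ → A`. -/
def mapTimedWord {Γ A : Type} (h : Γ → A) (v : TimedWord Γ) : TimedWord A :=
  ⟨v.1.map (fun p => (h p.1, p.2)), by
    cases v with
    | mk l hl => cases l with
      | nil => exact absurd rfl hl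
      | cons p l => simp⟩

/-- `h(r)(w) = Σ (r(v) : v ∈ 𝕋Γ⁺, h(v) = w)` (a finite sum when `Γ` is finite). -/
noncomputable def pushQTL {Γ A M : Type} [AddCommMonoid M] (h : Γ → A)
    (r : TimedWord Γ → M) (w : TimedWord A) : M :=
  ∑ᶠ v ∈ { v : TimedWord Γ | mapTimedWord h v = w }, r v

/-- `(val ∘ g)(w) = val((g(a₁),t₁)…(g(aₙ),tₙ))`. -/
def valComp {A M : Type} (val : List ((M × M) × ℝ≥0) → M) (g : A → M × M)
    (w : TimedWord A) : M :=
  val (w.1.map (fun p => (g p.1, p.2)))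

/-- The intersection `r ∩ 𝓛` of a quantitative timed language with a timed language. -/
noncomputable def interQTL {A M : Type} [Zero M] (r : TimedWord A → M)
    (𝓛 : Set (TimedWord A)) (w : TimedWord A) : M :=
  if w ∈ 𝓛 then r w else 0

/-- Membership in the Nivat class `N^P(A, 𝕄)`: `𝕃 = h((val ∘ g) ∩ 𝓛)` for some alphabet `Γ`,
maps `h : Γ → A`, `g : Γ → M × M` and a timed language `𝓛` recognizable by a timed
automaton satisfying `P`. -/
def NivatMem {A M : Type} [AddCommMonoid M] (val : List ((M × M) × ℝ≥0) → M)
    (P : ∀ {Γ : Type}, TimedAutomaton Γ → Prop) (𝕃 : TimedWord A → M) : Prop :=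
  ∃ (Γ : Type) (_ : Finite Γ) (_ : Nonempty Γ) (h : Γ → A) (g : Γ → M × M)
    (𝓛 : Set (TimedWord Γ)),
      TLRecognizableBy P 𝓛 ∧ ∀ w, 𝕃 w = pushQTL h (interQTL (valComp val g) 𝓛) w

/-- Membership in the class `H^P(A, 𝕄)`: `𝕃 = h(r)` for some alphabet `Γ`, `h : Γ → A`
and a quantitative timed language `r` recognizable by a WTA whose underlying timed
automaton satisfies `P`. -/
def HMem {A M : Type} [AddCommMonoid M] (val : List ((M × M) × ℝ≥0) → M)
    (P : ∀ {Γ : Type}, TimedAutomaton Γ → Prop) (𝕃 : TimedWord A → M) : Prop :=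
  ∃ (Γ : Type) (_ : Finite Γ) (_ : Nonempty Γ) (h : Γ → A) (r : TimedWord Γ → M),
      QTLRecognizableBy val (fun T => P T) r ∧ ∀ w, 𝕃 w = pushQTL h r w

/-- Idempotency of a timed valuation monoid. -/
def IsIdempotent (M : Type) [Add M] : Prop := ∀ m : M, m + m = m

/-- Location-independence of a timed valuation function: the value of `val` on a non-empty
timed word over `M × M` depends only on the second components and the time stamps. -/
def LocIndep {M : Type} (val : List ((M × M) × ℝ≥0) → M) : Prop :=
  ∀ l l' : List ((M × M) × ℝ≥0), l ≠ [] →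
    l.map (fun p => (p.1.2, p.2)) = l'.map (fun p => (p.1.2, p.2)) → val l = val l'

/-! ### Auxiliary material for the product construction -/

section ProductConstruction

variable {S M : Type}

/-- Map a clock constraint along a clock renaming. -/
def ClockConstraint.cmap {C C' : Type} (g : C → C') : ClockConstraint C → ClockConstraint C'
  | .tt => .tt
  | .atom x op c => .atom (g x) op c
  | .conj φ ψ => .conj (φ.cmap g) (ψ.cmap g)

lemma sat_cmap {C C' : Type} (g : C → C') (ν : ClockVal C') :
    ∀ φ : ClockConstraint C, (φ.cmap g).Sat ν ↔ φ.Sat (fun x => ν (g x))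
  | .tt => Iff.rfl
  | .atom _ _ _ => Iff.rfl
  | .conj φ ψ => and_congr (sat_cmap g ν φ) (sat_cmap g ν ψ)

/-- Project a clock constraint over `C1 ⊕ C2` onto `C1`. -/
def unmapL {C1 C2 : Type} : ClockConstraint (C1 ⊕ C2) → ClockConstraint C1
  | .tt => .tt
  | .atom (Sum.inl x) op c => .atom x op c
  | .atom (Sum.inr _) _ _ => .tt
  | .conj φ ψ => .conj (unmapL φ) (unmapL ψ)

/-- Project a clock constraint over `C1 ⊕ C2` onto `C2`. -/
def unmapR {C1 C2 : Type} : ClockConstraint (C1 ⊕ C2) → ClockConstraint C2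
  | .tt => .tt
  | .atom (Sum.inl _) _ _ => .tt
  | .atom (Sum.inr x) op c => .atom x op c
  | .conj φ ψ => .conj (unmapR φ) (unmapR ψ)

lemma unmapL_cmap {C1 C2 : Type} : ∀ φ : ClockConstraint C1,
    unmapL (φ.cmap (Sum.inl : C1 → C1 ⊕ C2)) = φ
  | .tt => rfl
  | .atom _ _ _ => rfl
  | .conj φ ψ => by
      simp only [ClockConstraint.cmap, unmapL, unmapL_cmap φ, unmapL_cmap ψ]

lemma unmapR_cmap {C1 C2 : Type} : ∀ φ : ClockConstraint C2,
    unmapR (φ.cmap (Sum.inr : C2 → C1 ⊕ C2)) = φ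
  | .tt => rfl
  | .atom _ _ _ => rfl
  | .conj φ ψ => by
      simp only [ClockConstraint.cmap, unmapR, unmapR_cmap φ, unmapR_cmap ψ]

/-- The product of two edges. -/
def pe {L1 L2 C1 C2 : Type} (e : Edge L1 S C1) (f : Edge L2 S C2) :
    Edge (L1 × L2) S (C1 ⊕ C2) :=
  ⟨(e.src, f.src), e.label, .conj (e.guard.cmap Sum.inl) (f.guard.cmap Sum.inr),
    Sum.inl '' e.reset ∪ Sum.inr '' f.reset, (e.dst, f.dst)⟩

/-- The first projection of a product edge. -/
def exW {L1 L2 C1 C2 : Type} (g : Edge (L1 × L2) S (C1 ⊕ C2)) : Edge L1 S C1 :=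
  ⟨g.src.1, g.label, (match g.guard with | .conj a _ => unmapL a | _ => .tt),
    Sum.inl ⁻¹' g.reset, g.dst.1⟩

/-- The second projection of a product edge. -/
def exT {L1 L2 C1 C2 : Type} (g : Edge (L1 × L2) S (C1 ⊕ C2)) : Edge L2 S C2 :=
  ⟨g.src.2, g.label, (match g.guard with | .conj _ b => unmapR b | _ => .tt),
    Sum.inr ⁻¹' g.reset, g.dst.2⟩

lemma preimage_inl_union {C1 C2 : Type} (R1 : Set C1) (R2 : Set C2) :
    (Sum.inl : C1 → C1 ⊕ C2) ⁻¹' (Sum.inl '' R1 ∪ Sum.inr '' R2) = R1 := by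
  ext x; simp

lemma preimage_inr_union {C1 C2 : Type} (R1 : Set C1) (R2 : Set C2) :
    (Sum.inr : C2 → C1 ⊕ C2) ⁻¹' (Sum.inl '' R1 ∪ Sum.inr '' R2) = R2 := by
  ext x; simp

lemma exW_pe {L1 L2 C1 C2 : Type} (e : Edge L1 S C1) (f : Edge L2 S C2) :
    exW (pe e f) = e := by
  obtain ⟨s, a, gu, R, d⟩ := e
  simp only [exW, pe, unmapL_cmap, preimage_inl_union]

lemma exT_pe {L1 L2 C1 C2 : Type} (e : Edge L1 S C1) (f : Edge L2 S C2)
    (hlab : e.label = f.label) : exT (pe e f) = f := by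
  obtain ⟨s, a, gu, R, d⟩ := f
  simp only [exT, pe, unmapR_cmap, preimage_inr_union, hlab]

/-- Restriction of a clock valuation to the left summand. -/
def vL {C1 C2 : Type} (ν : ClockVal (C1 ⊕ C2)) : ClockVal C1 := fun x => ν (Sum.inl x)

/-- Restriction of a clock valuation to the right summand. -/
def vR {C1 C2 : Type} (ν : ClockVal (C1 ⊕ C2)) : ClockVal C2 := fun x => ν (Sum.inr x)

lemma vL_add {C1 C2 : Type} (ν : ClockVal (C1 ⊕ C2)) (t : ℝ≥0) :
    vL (ν.add t) = (vL ν).add t := rfl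

lemma vR_add {C1 C2 : Type} (ν : ClockVal (C1 ⊕ C2)) (t : ℝ≥0) :
    vR (ν.add t) = (vR ν).add t := rfl

lemma vL_reset {C1 C2 : Type} (ν : ClockVal (C1 ⊕ C2)) (R1 : Set C1) (R2 : Set C2) :
    vL (ν.reset (Sum.inl '' R1 ∪ Sum.inr '' R2)) = (vL ν).reset R1 := by
  funext x
  by_cases hx : x ∈ R1 <;> simp [vL, ClockVal.reset, hx]

lemma vR_reset {C1 C2 : Type} (ν : ClockVal (C1 ⊕ C2)) (R1 : Set C1) (R2 : Set C2) :
    vR (ν.reset (Sum.inl '' R1 ∪ Sum.inr '' R2)) = (vR ν).reset R2 := by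
  funext x
  by_cases hx : x ∈ R2 <;> simp [vR, ClockVal.reset, hx]

/-- The product of a weighted timed automaton with a timed automaton; weights come
from the WTA component only. -/
noncomputable def prodW (W : WTA S M) (T : TimedAutomaton S) : WTA S M where
  L := W.L × T.L
  C := W.C ⊕ T.C
  finL := by haveI := W.finL; haveI := T.finL; infer_instance
  finC := by haveI := W.finC; haveI := T.finC; infer_instance
  I := W.I ×ˢ T.I
  F := W.F ×ˢ T.F
  E := (fun p : Edge W.L S W.C × Edge T.L S T.C => pe p.1 p.2) ''
        {p | p.1 ∈ W.E ∧ p.2 ∈ T.E ∧ p.1.label = p.2.label}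
  finE := Set.Finite.image _
    ((W.finE.prod T.finE).subset (fun p hp => Set.mem_prod.2 ⟨hp.1, hp.2.1⟩))
  wtL := fun p => W.wtL p.1
  wtE := fun g => W.wtE (exW g)

lemma run_shape {A : Type} (T : TimedAutomaton A) :
    ∀ (w : List (A × ℝ≥0)) (es : List (Edge T.L A T.C)) (ℓ : T.L) (ν : ClockVal T.C),
      T.IsRunFrom ℓ ν w es →
      es.length = w.length ∧ es.map Edge.label = w.map Prod.fst ∧ ∀ e ∈ es, e ∈ T.E := by
  intro w
  induction w with
  | nil =>
    intro es ℓ ν h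
    cases es with
    | nil => simp
    | cons e es => exact absurd h (by simp [TimedAutomaton.IsRunFrom])
  | cons p w ih =>
    intro es ℓ ν h
    obtain ⟨a, t⟩ := p
    cases es with
    | nil => exact absurd h (by simp [TimedAutomaton.IsRunFrom])
    | cons e es =>
      rw [TimedAutomaton.IsRunFrom] at h
      obtain ⟨hE, _, hlab, _, hrest⟩ := h
      obtain ⟨h1, h2, h3⟩ := ih es _ _ hrest
      refine ⟨by simp [h1], by simp [h2, hlab], ?_⟩
      intro e' he'
      rcases List.mem_cons.1 he' with rfl | hm
      · exact hE
      · exact h3 _ hm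

lemma run_pair {W : WTA S M} {T : TimedAutomaton S} :
    ∀ (w : List (S × ℝ≥0)) (es1 : List (Edge W.L S W.C)) (es2 : List (Edge T.L S T.C))
      (ℓ1 : W.L) (ℓ2 : T.L) (ν : ClockVal (W.C ⊕ T.C)),
      W.toTimedAutomaton.IsRunFrom ℓ1 (vL ν) w es1 →
      T.IsRunFrom ℓ2 (vR ν) w es2 →
      (prodW W T).toTimedAutomaton.IsRunFrom (ℓ1, ℓ2) ν w (List.zipWith pe es1 es2) := by
  intro w
  induction w with
  | nil =>
    intro es1 es2 ℓ1 ℓ2 ν h1 h2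
    cases es1 with
    | cons e es1 => exact absurd h1 (by simp [TimedAutomaton.IsRunFrom])
    | nil =>
      cases es2 with
      | cons f es2 => exact absurd h2 (by simp [TimedAutomaton.IsRunFrom])
      | nil => exact Set.mem_prod.2 ⟨h1, h2⟩
  | cons p w ih =>
    intro es1 es2 ℓ1 ℓ2 ν h1 h2
    obtain ⟨a, t⟩ := p
    cases es1 with
    | nil => exact absurd h1 (by simp [TimedAutomaton.IsRunFrom])
    | cons e es1 =>
      cases es2 with
      | nil => exact absurd h2 (by simp [TimedAutomaton.IsRunFrom])
      | cons f es2 =>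
        rw [TimedAutomaton.IsRunFrom] at h1 h2
        obtain ⟨heE, hes, hel, heg, h1'⟩ := h1
        obtain ⟨hfE, hfs, hfl, hfg, h2'⟩ := h2
        show pe e f ∈ (prodW W T).E ∧ (pe e f).src = (ℓ1, ℓ2) ∧ (pe e f).label = a ∧
          (pe e f).guard.Sat (ν.add t) ∧ (prodW W T).toTimedAutomaton.IsRunFrom (pe e f).dst
            ((ν.add t).reset (pe e f).reset) w (List.zipWith pe es1 es2)
        refine ⟨⟨(e, f), ⟨heE, hfE, by rw [hel, hfl]⟩, rfl⟩, ?_, ?_, ?_, ?_⟩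
        · show (e.src, f.src) = (ℓ1, ℓ2)
          rw [hes, hfs]
        · exact hel
        · exact ⟨(sat_cmap _ _ _).2 heg, (sat_cmap _ _ _).2 hfg⟩
        · show (prodW W T).toTimedAutomaton.IsRunFrom (e.dst, f.dst)
            ((ν.add t).reset (Sum.inl '' e.reset ∪ Sum.inr '' f.reset)) w
            (List.zipWith pe es1 es2)
          refine ih es1 es2 e.dst f.dst _ ?_ ?_
          · rw [vL_reset, vL_add]; exact h1'
          · rw [vR_reset, vR_add]; exact h2'

lemma pair_of_run {W : WTA S M} {T : TimedAutomaton S} :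
    ∀ (w : List (S × ℝ≥0)) (es : List (Edge (W.L × T.L) S (W.C ⊕ T.C)))
      (ℓ1 : W.L) (ℓ2 : T.L) (ν : ClockVal (W.C ⊕ T.C)),
      (prodW W T).toTimedAutomaton.IsRunFrom (ℓ1, ℓ2) ν w es →
      ∃ es1 es2, W.toTimedAutomaton.IsRunFrom ℓ1 (vL ν) w es1 ∧
        T.IsRunFrom ℓ2 (vR ν) w es2 ∧ es = List.zipWith pe es1 es2 := by
  intro w
  induction w with
  | nil =>
    intro es ℓ1 ℓ2 ν h
    cases es with
    | cons g es => exact absurd h (by simp [TimedAutomaton.IsRunFrom])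
    | nil =>
      have h' := Set.mem_prod.1 h
      exact ⟨[], [], h'.1, h'.2, rfl⟩
  | cons p w ih =>
    intro es ℓ1 ℓ2 ν h
    obtain ⟨a, t⟩ := p
    cases es with
    | nil => exact absurd h (by simp [TimedAutomaton.IsRunFrom])
    | cons g es =>
      change g ∈ (prodW W T).E ∧ g.src = (ℓ1, ℓ2) ∧ g.label = a ∧ g.guard.Sat (ν.add t) ∧
        (prodW W T).toTimedAutomaton.IsRunFrom g.dst ((ν.add t).reset g.reset) w es at h
      obtain ⟨hgE, hgs, hgl, hgg, h'⟩ := h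
      obtain ⟨⟨e, f⟩, ⟨heE, hfE, hlab⟩, rfl⟩ := hgE
      have hsrc : (e.src, f.src) = (ℓ1, ℓ2) := hgs
      have hguard : e.guard.Sat (fun x => (ν.add t) (Sum.inl x)) ∧
          f.guard.Sat (fun x => (ν.add t) (Sum.inr x)) :=
        ⟨(sat_cmap _ _ _).1 hgg.1, (sat_cmap _ _ _).1 hgg.2⟩
      have h'' : (prodW W T).toTimedAutomaton.IsRunFrom (e.dst, f.dst)
          ((ν.add t).reset (Sum.inl '' e.reset ∪ Sum.inr '' f.reset)) w es := h'
      obtain ⟨es1, es2, k1, k2, rfl⟩ := ih es e.dst f.dst _ h''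
      rw [vL_reset, vL_add] at k1
      rw [vR_reset, vR_add] at k2
      refine ⟨e :: es1, f :: es2, ?_, ?_, rfl⟩
      · rw [TimedAutomaton.IsRunFrom]
        exact ⟨heE, congrArg Prod.fst hsrc, hgl, hguard.1, k1⟩
      · rw [TimedAutomaton.IsRunFrom]
        exact ⟨hfE, congrArg Prod.snd hsrc, hlab ▸ hgl, hguard.2, k2⟩

lemma map_exW {W : WTA S M} {T : TimedAutomaton S} :
    ∀ (es1 : List (Edge W.L S W.C)) (es2 : List (Edge T.L S T.C)),
      es1.length = es2.length → (List.zipWith pe es1 es2).map exW = es1 := by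
  intro es1
  induction es1 with
  | nil => intro es2 _; simp
  | cons e es1 ih =>
    intro es2 hlen
    cases es2 with
    | nil => simp at hlen
    | cons f es2 =>
      simp only [List.zipWith_cons_cons, List.map_cons, exW_pe,
        ih es2 (by simpa using hlen)]

lemma map_exT {W : WTA S M} {T : TimedAutomaton S} :
    ∀ (es1 : List (Edge W.L S W.C)) (es2 : List (Edge T.L S T.C)),
      es1.length = es2.length →
      es1.map Edge.label = es2.map Edge.label →
      (List.zipWith pe es1 es2).map exT = es2 := by
  intro es1
  induction es1 with
  | nil =>
    intro es2 hlen _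
    cases es2 with
    | nil => simp
    | cons f es2 => simp at hlen
  | cons e es1 ih =>
    intro es2 hlen hlab
    cases es2 with
    | nil => simp at hlen
    | cons f es2 =>
      simp only [List.map_cons, List.cons.injEq] at hlab
      simp only [List.zipWith_cons_cons, List.map_cons, exT_pe e f hlab.1,
        ih es2 (by simpa using hlen) hlab.2]

lemma injOn_pair {W : WTA S M} {T : TimedAutomaton S} (w : TimedWord S) :
    Set.InjOn (fun p : List (Edge W.L S W.C) × List (Edge T.L S T.C) =>
        List.zipWith pe p.1 p.2)
      (W.toTimedAutomaton.RunOn w ×ˢ T.RunOn w) := by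
  rintro ⟨a1, a2⟩ ha ⟨b1, b2⟩ hb heq
  obtain ⟨⟨ℓ1, -, h1⟩, ⟨ℓ2, -, h2⟩⟩ := Set.mem_prod.1 ha
  obtain ⟨⟨m1, -, g1⟩, ⟨m2, -, g2⟩⟩ := Set.mem_prod.1 hb
  obtain ⟨la1, lab1, -⟩ := run_shape _ _ _ _ _ h1
  obtain ⟨la2, lab2, -⟩ := run_shape _ _ _ _ _ h2
  obtain ⟨lb1, labb1, -⟩ := run_shape _ _ _ _ _ g1
  obtain ⟨lb2, labb2, -⟩ := run_shape _ _ _ _ _ g2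
  dsimp only at heq
  have e1 : a1 = b1 := by
    rw [← map_exW a1 a2 (by rw [la1, la2]), heq, map_exW b1 b2 (by rw [lb1, lb2])]
  have e2 : a2 = b2 := by
    rw [← map_exT a1 a2 (by rw [la1, la2]) (by rw [lab1, lab2]), heq,
      map_exT b1 b2 (by rw [lb1, lb2]) (by rw [labb1, labb2])]
  rw [Prod.mk.injEq]
  exact ⟨e1, e2⟩

lemma runOn_prod {W : WTA S M} {T : TimedAutomaton S} (w : TimedWord S) :
    (prodW W T).toTimedAutomaton.RunOn w =
      (fun p : List (Edge W.L S W.C) × List (Edge T.L S T.C) =>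
        List.zipWith pe p.1 p.2) ''
        (W.toTimedAutomaton.RunOn w ×ˢ T.RunOn w) := by
  ext es
  constructor
  · rintro ⟨ℓ0, hI, hrun⟩
    obtain ⟨es1, es2, h1, h2, rfl⟩ := pair_of_run w.1 es ℓ0.1 ℓ0.2 _ hrun
    exact ⟨(es1, es2),
      Set.mem_prod.2 ⟨⟨ℓ0.1, (Set.mem_prod.1 hI).1, h1⟩, ⟨ℓ0.2, (Set.mem_prod.1 hI).2, h2⟩⟩,
      rfl⟩
  · rintro ⟨⟨es1, es2⟩, hmem, rfl⟩
    obtain ⟨⟨ℓ1, hI1, h1⟩, ⟨ℓ2, hI2, h2⟩⟩ := Set.mem_prod.1 hmem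
    exact ⟨(ℓ1, ℓ2), Set.mem_prod.2 ⟨hI1, hI2⟩, run_pair w.1 es1 es2 ℓ1 ℓ2 ClockVal.zero h1 h2⟩

lemma runWord_pair {W : WTA S M} {T : TimedAutomaton S} :
    ∀ (w : List (S × ℝ≥0)) (es1 : List (Edge W.L S W.C)) (es2 : List (Edge T.L S T.C)),
      es1.length = es2.length →
      (prodW W T).runWord w (List.zipWith pe es1 es2) = W.runWord w es1 := by
  intro w
  induction w with
  | nil => intro es1 es2 _; rfl
  | cons p w ih =>
    intro es1 es2 hlen
    cases es1 with
    | nil =>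
      cases es2 with
      | nil => rfl
      | cons f es2 => simp at hlen
    | cons e es1 =>
      cases es2 with
      | nil => simp at hlen
      | cons f es2 =>
        show ((W.wtL (pe e f).src.1, W.wtE (exW (pe e f))), p.2) ::
            (prodW W T).runWord w (List.zipWith pe es1 es2) =
          ((W.wtL e.src, W.wtE e), p.2) :: W.runWord w es1
        rw [exW_pe, ih es1 es2 (by simpa using hlen)]
        rfl

lemma finite_lists {α : Type} {s : Set α} (hs : s.Finite) :
    ∀ n : ℕ, {l : List α | l.length = n ∧ ∀ x ∈ l, x ∈ s}.Finite
  | 0 => Set.Finite.subset (Set.finite_singleton []) (by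
      rintro l ⟨hl, -⟩
      simp [List.length_eq_zero_iff.1 hl])
  | n + 1 => Set.Finite.subset ((hs.prod (finite_lists hs n)).image (fun p => p.1 :: p.2)) (by
      rintro l ⟨hl, hmem⟩
      cases l with
      | nil => simp at hl
      | cons a l =>
        exact ⟨(a, l), Set.mem_prod.2 ⟨hmem a (by simp),
          ⟨by simpa using hl, fun x hx => hmem x (by simp [hx])⟩⟩, rfl⟩)

lemma finite_runs {A : Type} (T : TimedAutomaton A) (w : TimedWord A) :
    (T.RunOn w).Finite :=
  (finite_lists T.finE w.1.length).subset (by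
    rintro es ⟨ℓ0, _, hrun⟩
    obtain ⟨h1, -, h3⟩ := run_shape T w.1 es ℓ0 _ hrun
    exact ⟨h1, h3⟩)

lemma nsmul_of_idem {M : Type} [AddCommMonoid M] (hidem : IsIdempotent M) (m : M) :
    ∀ n : ℕ, 0 < n → n • m = m
  | 1, _ => one_nsmul m
  | n + 2, _ => by
      rw [succ_nsmul, nsmul_of_idem hidem m (n + 1) (Nat.succ_pos _), hidem]

end ProductConstruction

/-- If `𝕄` is an idempotent timed valuation monoid, `𝓛 ⊆ 𝕋Σ⁺` is a
recognizable timed language and `r : 𝕋Σ⁺ → M` is a recognizable quantitative timed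
language over `𝕄`, then `r ∩ 𝓛` is recognizable over `𝕄`. -/
theorem interQTL_recognizable_of_idempotent {S M : Type} [Finite S] [Nonempty S]
    [AddCommMonoid M] (val : List ((M × M) × ℝ≥0) → M) (hidem : IsIdempotent M)
    (𝓛 : Set (TimedWord S)) (h𝓛 : TLRecognizableBy (fun _ => True) 𝓛)
    (r : TimedWord S → M) (hr : QTLRecognizable val r) :
    QTLRecognizable val (interQTL r 𝓛) := by
  obtain ⟨T, -, hT⟩ := h𝓛
  obtain ⟨W, hW⟩ := hr
  refine ⟨prodW W T, fun w => ?_⟩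
  have hRW := finite_runs W.toTimedAutomaton w
  have hRT := finite_runs T w
  rw [WTA.behavior, runOn_prod w]
  refine (finsum_mem_image (injOn_pair w)).trans ?_
  have hcongr : ∀ p ∈ W.toTimedAutomaton.RunOn w ×ˢ T.RunOn w,
      val ((prodW W T).runWord w.1 (List.zipWith pe p.1 p.2)) =
        val (W.runWord w.1 p.1) := by
    rintro ⟨a1, a2⟩ hp
    obtain ⟨⟨ℓ1, -, h1⟩, ⟨ℓ2, -, h2⟩⟩ := Set.mem_prod.1 hp
    obtain ⟨la1, -, -⟩ := run_shape _ _ _ _ _ h1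
    obtain ⟨la2, -, -⟩ := run_shape _ _ _ _ _ h2
    rw [runWord_pair w.1 a1 a2 (by rw [la1, la2])]
  refine (finsum_mem_congr rfl hcongr).trans ?_
  have hset : W.toTimedAutomaton.RunOn w ×ˢ T.RunOn w =
      ↑(hRW.toFinset ×ˢ hRT.toFinset) := by
    rw [Finset.coe_product, Set.Finite.coe_toFinset, Set.Finite.coe_toFinset]
  rw [hset, finsum_mem_coe_finset, Finset.sum_product]
  simp only [Finset.sum_const]
  by_cases hw : w ∈ 𝓛
  · have hne : (T.RunOn w).Nonempty := by rw [← hT] at hw; exact hw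
    have hcard : 0 < hRT.toFinset.card := by
      rw [Finset.card_pos, Set.Finite.toFinset_nonempty]
      exact hne
    have hWsum : r w = ∑ x ∈ hRW.toFinset, val (W.runWord w.1 x) := by
      rw [← hW w, WTA.behavior, ← finsum_mem_coe_finset]
      exact finsum_mem_congr hRW.coe_toFinset.symm (fun _ _ => rfl)
    rw [interQTL, if_pos hw, hWsum]
    exact Finset.sum_congr rfl (fun x _ => nsmul_of_idem hidem _ _ hcard)
  · have hempty : T.RunOn w = ∅ := by
      rw [← hT] at hw
      exact Set.not_nonempty_iff_eq_empty.1 hw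
    rw [interQTL, if_neg hw]
    simp [Set.Finite.toFinset_eq_empty.2 hempty]
end

section
/- Let Σ be an alphabet, 𝕄 = (M,+,val,𝟘) a timed valuation monoid, 𝓛 ⊆ 𝕋Σ⁺ an unambiguously recognizable timed language and r : 𝕋Σ⁺ → M an unambiguously recognizable quantitative timed language over 𝕄. Then the quantitative timed language r ∩ 𝓛 is unambiguously recognizable over 𝕄. -/
open scoped NNReal Classical

section InterAux

/-- Rename clocks in a clock constraint. -/
def renameCC {C D : Type} (f : C → D) : ClockConstraint C → ClockConstraint D
  | .tt => .tt
  | .atom x op c => .atom (f x) op c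
  | .conj φ ψ => .conj (renameCC f φ) (renameCC f ψ)

lemma sat_renameCC {C D : Type} (f : C → D) (ν : ClockVal D) (φ : ClockConstraint C) :
    (renameCC f φ).Sat ν ↔ φ.Sat (fun x => ν (f x)) := by
  induction φ <;> simp [renameCC, ClockConstraint.Sat, *]

/-- Inverse renaming along `Sum.inl`. -/
def unrenameL {C1 C2 : Type} : ClockConstraint (C1 ⊕ C2) → ClockConstraint C1
  | .tt => .tt
  | .atom (Sum.inl x) op c => .atom x op c
  | .atom (Sum.inr _) _ _ => .tt
  | .conj φ ψ => .conj (unrenameL φ) (unrenameL ψ)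

lemma unrenameL_renameCC {C1 C2 : Type} (φ : ClockConstraint C1) :
    unrenameL (renameCC (Sum.inl : C1 → C1 ⊕ C2) φ) = φ := by
  induction φ <;> simp [renameCC, unrenameL, *]

def leftConj {C : Type} : ClockConstraint C → ClockConstraint C
  | .conj φ _ => φ
  | φ => φ

/-- Product edge. -/
def combineEdge {L1 L2 A C1 C2 : Type} (e1 : Edge L1 A C1) (e2 : Edge L2 A C2) :
    Edge (L1 × L2) A (C1 ⊕ C2) where
  src := (e1.src, e2.src)
  label := e1.label
  guard := .conj (renameCC Sum.inl e1.guard) (renameCC Sum.inr e2.guard)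
  reset := Sum.inl '' e1.reset ∪ Sum.inr '' e2.reset
  dst := (e1.dst, e2.dst)

/-- First projection of a product edge. -/
def projEdge1 {L1 L2 A C1 C2 : Type} (e : Edge (L1 × L2) A (C1 ⊕ C2)) : Edge L1 A C1 where
  src := e.src.1
  label := e.label
  guard := unrenameL (leftConj e.guard)
  reset := Sum.inl ⁻¹' e.reset
  dst := e.dst.1

lemma projEdge1_combine {L1 L2 A C1 C2 : Type} (e1 : Edge L1 A C1) (e2 : Edge L2 A C2) :
    projEdge1 (combineEdge e1 e2) = e1 := by
  obtain ⟨s, l, g, R, d⟩ := e1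
  simp only [projEdge1, combineEdge, leftConj, unrenameL_renameCC]
  congr 1
  ext x
  simp

/-- Product timed automaton. -/
noncomputable def prodTA {A : Type} (T1 T2 : TimedAutomaton A) : TimedAutomaton A where
  L := T1.L × T2.L
  C := T1.C ⊕ T2.C
  finL := have := T1.finL; have := T2.finL; inferInstance
  finC := have := T1.finC; have := T2.finC; inferInstance
  I := T1.I ×ˢ T2.I
  F := T1.F ×ˢ T2.F
  E := (fun p : Edge T1.L A T1.C × Edge T2.L A T2.C => combineEdge p.1 p.2) ''
        {p | p.1 ∈ T1.E ∧ p.2 ∈ T2.E ∧ p.1.label = p.2.label}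
  finE := Set.Finite.image _ ((T1.finE.prod T2.finE).subset (fun p hp => ⟨hp.1, hp.2.1⟩))

lemma isRunFrom_length {A : Type} (T : TimedAutomaton A) :
    ∀ (w : List (A × ℝ≥0)) (es : List (Edge T.L A T.C)) (ℓ : T.L) (ν : ClockVal T.C),
      T.IsRunFrom ℓ ν w es → es.length = w.length := by
  intro w
  induction w with
  | nil =>
    intro es ℓ ν h
    cases es with
    | nil => rfl
    | cons e es => exact absurd h (by simp [TimedAutomaton.IsRunFrom])
  | cons p w ih =>
    obtain ⟨a, t⟩ := p
    intro es ℓ ν h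
    cases es with
    | nil => exact absurd h (by simp [TimedAutomaton.IsRunFrom])
    | cons e es =>
      obtain ⟨_, _, _, _, h5⟩ := h
      simpa using ih es _ _ h5

lemma resetL {C1 C2 : Type} (ν : ClockVal (C1 ⊕ C2)) (Λ1 : Set C1) (Λ2 : Set C2) :
    ClockVal.reset (fun x => ν (Sum.inl x)) Λ1
      = fun x => (ν.reset (Sum.inl '' Λ1 ∪ Sum.inr '' Λ2)) (Sum.inl x) := by
  funext x
  simp [ClockVal.reset]

lemma resetR {C1 C2 : Type} (ν : ClockVal (C1 ⊕ C2)) (Λ1 : Set C1) (Λ2 : Set C2) :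
    ClockVal.reset (fun x => ν (Sum.inr x)) Λ2
      = fun x => (ν.reset (Sum.inl '' Λ1 ∪ Sum.inr '' Λ2)) (Sum.inr x) := by
  funext x
  simp [ClockVal.reset]

lemma isRunFrom_prod {A : Type} (T1 T2 : TimedAutomaton A) :
    ∀ (w : List (A × ℝ≥0)) (ν : ClockVal (T1.C ⊕ T2.C)) (ℓ1 : T1.L) (ℓ2 : T2.L)
      (es : List (Edge (T1.L × T2.L) A (T1.C ⊕ T2.C))),
    (prodTA T1 T2).IsRunFrom (ℓ1, ℓ2) ν w es ↔
    ∃ es1 es2, T1.IsRunFrom ℓ1 (fun x => ν (Sum.inl x)) w es1 ∧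
      T2.IsRunFrom ℓ2 (fun x => ν (Sum.inr x)) w es2 ∧
      es = List.zipWith combineEdge es1 es2 := by
  intro w
  induction w with
  | nil =>
    intro ν ℓ1 ℓ2 es
    cases es with
    | nil =>
      constructor
      · intro h
        exact ⟨[], [], h.1, h.2, rfl⟩
      · rintro ⟨es1, es2, h1, h2, he⟩
        cases es1 with
        | cons e1 es1 => exact absurd h1 (by simp [TimedAutomaton.IsRunFrom])
        | nil =>
          cases es2 with
          | cons e2 es2 => exact absurd h2 (by simp [TimedAutomaton.IsRunFrom])
          | nil => exact ⟨h1, h2⟩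
    | cons e es =>
      constructor
      · intro h
        exact absurd h (by simp [TimedAutomaton.IsRunFrom, prodTA])
      · rintro ⟨es1, es2, h1, h2, he⟩
        cases es1 with
        | cons e1 es1 => exact absurd h1 (by simp [TimedAutomaton.IsRunFrom])
        | nil =>
          cases es2 with
          | cons e2 es2 => exact absurd h2 (by simp [TimedAutomaton.IsRunFrom])
          | nil => simp at he
  | cons p w ih =>
    obtain ⟨a, t⟩ := p
    intro ν ℓ1 ℓ2 es
    cases es with
    | nil =>
      constructor
      · intro h
        exact absurd h (by simp [TimedAutomaton.IsRunFrom, prodTA])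
      · rintro ⟨es1, es2, h1, h2, he⟩
        cases es1 with
        | nil => exact absurd h1 (by simp [TimedAutomaton.IsRunFrom])
        | cons e1 es1 =>
          cases es2 with
          | nil => exact absurd h2 (by simp [TimedAutomaton.IsRunFrom])
          | cons e2 es2 => simp [List.zipWith_cons_cons] at he
    | cons e es =>
      constructor
      · rintro ⟨hE, hsrc, hlab, hsat, hrest⟩
        obtain ⟨⟨e1, e2⟩, ⟨he1, he2, hlabs⟩, rfl⟩ := hE
        have hsrc1 : e1.src = ℓ1 := congrArg Prod.fst hsrc
        have hsrc2 : e2.src = ℓ2 := congrArg Prod.snd hsrc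
        have hsat' : e1.guard.Sat (fun x => (ν.add t) (Sum.inl x)) ∧
            e2.guard.Sat (fun x => (ν.add t) (Sum.inr x)) := by
          have h' := hsat
          simp only [combineEdge, ClockConstraint.Sat] at h'
          exact ⟨(sat_renameCC _ _ _).1 h'.1, (sat_renameCC _ _ _).1 h'.2⟩
        have hrest' : (prodTA T1 T2).IsRunFrom (e1.dst, e2.dst)
            ((ν.add t).reset (combineEdge e1 e2).reset) w es := hrest
        rw [ih] at hrest'
        obtain ⟨es1, es2, h1, h2, rfl⟩ := hrest'
        refine ⟨e1 :: es1, e2 :: es2, ⟨he1, hsrc1, hlab, hsat'.1, ?_⟩,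
          ⟨he2, hsrc2, hlabs ▸ hlab, hsat'.2, ?_⟩, rfl⟩
        · show T1.IsRunFrom e1.dst
            (ClockVal.reset (fun x => (ν.add t) (Sum.inl x)) e1.reset) w es1
          rw [resetL (ν.add t) e1.reset e2.reset]
          exact h1
        · show T2.IsRunFrom e2.dst
            (ClockVal.reset (fun x => (ν.add t) (Sum.inr x)) e2.reset) w es2
          rw [resetR (ν.add t) e1.reset e2.reset]
          exact h2
      · rintro ⟨es1, es2, h1, h2, he⟩
        cases es1 with
        | nil => exact absurd h1 (by simp [TimedAutomaton.IsRunFrom])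
        | cons e1 es1 =>
          cases es2 with
          | nil => exact absurd h2 (by simp [TimedAutomaton.IsRunFrom])
          | cons e2 es2 =>
            rw [List.zipWith_cons_cons] at he
            obtain ⟨rfl, rfl⟩ : e = combineEdge e1 e2 ∧ es = List.zipWith combineEdge es1 es2 := by
              injection he with h h'
              exact ⟨h, h'⟩
            obtain ⟨he1, hs1, hl1, hg1, hr1⟩ := h1
            obtain ⟨he2, hs2, hl2, hg2, hr2⟩ := h2
            refine ⟨⟨(e1, e2), ⟨he1, he2, hl2 ▸ hl1⟩, rfl⟩,
              by subst hs1 hs2; rfl, hl1, ?_, ?_⟩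
            · simp only [combineEdge, ClockConstraint.Sat, sat_renameCC]
              exact ⟨(sat_renameCC _ _ _).2 hg1, (sat_renameCC _ _ _).2 hg2⟩
            · show (prodTA T1 T2).IsRunFrom (e1.dst, e2.dst)
                ((ν.add t).reset (combineEdge e1 e2).reset) w (List.zipWith combineEdge es1 es2)
              refine (ih _ _ _ _).2 ?_
              refine ⟨es1, es2, ?_, ?_, rfl⟩
              · have h1' : T1.IsRunFrom e1.dst
                    (ClockVal.reset (fun x => (ν.add t) (Sum.inl x)) e1.reset) w es1 := hr1
                rw [resetL (ν.add t) e1.reset e2.reset] at h1'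
                exact h1'
              · have h2' : T2.IsRunFrom e2.dst
                    (ClockVal.reset (fun x => (ν.add t) (Sum.inr x)) e2.reset) w es2 := hr2
                rw [resetR (ν.add t) e1.reset e2.reset] at h2'
                exact h2'

lemma runOn_prod_s6 {A : Type} (T1 T2 : TimedAutomaton A) (w : TimedWord A) :
    (prodTA T1 T2).RunOn w =
      {es | ∃ es1 ∈ T1.RunOn w, ∃ es2 ∈ T2.RunOn w, es = List.zipWith combineEdge es1 es2} := by
  ext es
  simp only [TimedAutomaton.RunOn, Set.mem_setOf_eq]
  constructor
  · rintro ⟨⟨ℓ1, ℓ2⟩, hI, hrun⟩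
    replace hrun := (isRunFrom_prod T1 T2 _ _ ℓ1 ℓ2 _).1 hrun
    obtain ⟨es1, es2, h1, h2, he⟩ := hrun
    exact ⟨es1, ⟨ℓ1, hI.1, h1⟩, es2, ⟨ℓ2, hI.2, h2⟩, he⟩
  · rintro ⟨es1, ⟨ℓ1, hI1, h1⟩, es2, ⟨ℓ2, hI2, h2⟩, rfl⟩
    refine ⟨(ℓ1, ℓ2), ⟨hI1, hI2⟩, ?_⟩
    refine (isRunFrom_prod T1 T2 _ _ ℓ1 ℓ2 _).2 ?_
    exact ⟨es1, es2, h1, h2, rfl⟩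

/-- Product of a WTA with a timed automaton; weights come from the WTA. -/
noncomputable def prodWTA {A M : Type} (W : WTA A M) (T : TimedAutomaton A) : WTA A M where
  toTimedAutomaton := prodTA W.toTimedAutomaton T
  wtL := fun p => W.wtL p.1
  wtE := fun e => W.wtE (projEdge1 e)

lemma runWord_prod {A M : Type} (W : WTA A M) (T : TimedAutomaton A) :
    ∀ (w : List (A × ℝ≥0)) (es1 : List (Edge W.L A W.C)) (es2 : List (Edge T.L A T.C)),
      es1.length = es2.length →
      (prodWTA W T).runWord w (List.zipWith combineEdge es1 es2) = W.runWord w es1 := by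
  intro w
  induction w with
  | nil => intro es1 es2 _; simp [WTA.runWord]
  | cons p w ih =>
    rintro (_ | ⟨e1, es1⟩) (_ | ⟨e2, es2⟩) hlen
    · simp [WTA.runWord]; rfl
    · simp at hlen
    · simp at hlen
    · simp only [List.zipWith, WTA.runWord, List.zipWith_cons_cons]
      have : (prodWTA W T).runWord w (List.zipWith combineEdge es1 es2) = W.runWord w es1 :=
        ih es1 es2 (by simpa using hlen)
      simp only [WTA.runWord] at this
      rw [this]
      congr 1
      show ((W.wtL e1.src, W.wtE (projEdge1 (combineEdge e1 e2))), p.2) = _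
      rw [projEdge1_combine]

end InterAux

/-- If `𝓛 ⊆ 𝕋Σ⁺` is an unambiguously recognizable timed language and
`r : 𝕋Σ⁺ → M` is an unambiguously recognizable quantitative timed language over a timed
valuation monoid `𝕄`, then `r ∩ 𝓛` is unambiguously recognizable over `𝕄`. -/
theorem interQTL_unambiguously_recognizable {S M : Type} [Finite S] [Nonempty S]
    [AddCommMonoid M] (val : List ((M × M) × ℝ≥0) → M)
    (𝓛 : Set (TimedWord S)) (h𝓛 : TLRecognizableBy TimedAutomaton.Unambiguous 𝓛)
    (r : TimedWord S → M)
    (hr : QTLRecognizableBy val TimedAutomaton.Unambiguous r) :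
    QTLRecognizableBy val TimedAutomaton.Unambiguous (interQTL r 𝓛) := by
  obtain ⟨T, hTu, hTL⟩ := h𝓛
  obtain ⟨W, hWu, hWr⟩ := hr
  refine ⟨prodWTA W T, ?_, ?_⟩
  · intro w es hes es' hes'
    obtain ⟨es1, h1, es2, h2, rfl⟩ :=
      (Set.ext_iff.mp (runOn_prod_s6 W.toTimedAutomaton T w) es).mp hes
    obtain ⟨es1', h1', es2', h2', rfl⟩ :=
      (Set.ext_iff.mp (runOn_prod_s6 W.toTimedAutomaton T w) es').mp hes'
    rw [hWu w h1 h1', hTu w h2 h2']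
  · intro w
    have hprod : (prodWTA W T).toTimedAutomaton.RunOn w =
        {es | ∃ es1 ∈ W.toTimedAutomaton.RunOn w, ∃ es2 ∈ T.RunOn w,
          es = List.zipWith combineEdge es1 es2} := runOn_prod_s6 _ _ w
    by_cases hw : w ∈ 𝓛
    · have hT : (T.RunOn w).Nonempty := by
        rw [← hTL] at hw; exact hw
      obtain ⟨es2, hes2⟩ := hT
      by_cases hW : (W.toTimedAutomaton.RunOn w).Nonempty
      · obtain ⟨es1, hes1⟩ := hW
        have hsingT : T.RunOn w = {es2} := (hTu w).eq_singleton_of_mem hes2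
        have hsingW : W.toTimedAutomaton.RunOn w = {es1} := (hWu w).eq_singleton_of_mem hes1
        have hsets : (prodWTA W T).toTimedAutomaton.RunOn w =
            {List.zipWith combineEdge es1 es2} := by
          rw [hprod, hsingW, hsingT]
          ext es
          simp
          exact Iff.rfl
        have hlen : es1.length = es2.length := by
          obtain ⟨ℓ1, _, h1⟩ := hes1
          obtain ⟨ℓ2, _, h2⟩ := hes2
          rw [isRunFrom_length _ _ _ _ _ h1, isRunFrom_length _ _ _ _ _ h2]
        have hWb : W.behavior val w = val (W.runWord w.1 es1) := by
          unfold WTA.behavior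
          rw [hsingW, finsum_mem_singleton]
        unfold WTA.behavior
        rw [hsets]
        erw [finsum_mem_singleton, runWord_prod _ _ _ _ _ hlen]
        rw [
          interQTL, if_pos hw, ← hWr w, hWb]
      · have hempty : (prodWTA W T).toTimedAutomaton.RunOn w = ∅ := by
          rw [hprod]
          ext es
          simp only [Set.mem_setOf_eq, Set.mem_empty_iff_false, iff_false]
          refine ⟨?_, fun h => (h : False).elim⟩
          rintro ⟨es1, h1, _⟩
          exact hW ⟨es1, h1⟩
        have hWb : W.behavior val w = 0 := by
          unfold WTA.behavior
          rw [Set.not_nonempty_iff_eq_empty.mp hW, finsum_mem_empty]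
        unfold WTA.behavior
        rw [hempty, finsum_mem_empty, interQTL, if_pos hw, ← hWr w, hWb]
    · have hT : T.RunOn w = ∅ := by
        rw [← hTL] at hw
        exact Set.not_nonempty_iff_eq_empty.mp hw
      have hempty : (prodWTA W T).toTimedAutomaton.RunOn w = ∅ := by
        rw [hprod, hT]
        ext es
        simp
        exact fun h => (h : False)
      unfold WTA.behavior
      rw [hempty, finsum_mem_empty, interQTL, if_neg hw]
end
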